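/- For the transformed exponential distribution, the mean residual life m(t) = ∫₀^∞ (1 − G_t(x)) dx, where 1 − G_t(x) = e^{−θx}(1 + β(e^{−θx} − 1)) and β = λe^{−θt}/(1 + λ(e^{−θt} − 1)), equals (1 + λ(e^{−θt}/2 − 1))/(θ(1 + λ(e^{−θt} − 1))), and satisfies lim_{t→∞} m(t) = 1/θ. -/

import Mathlib

open MeasureTheory Filter Topology

lemma aux_exp_integral {a : ℝ} (ha : 0 < a) :
    ∫ x in Set.Ioi (0 : ℝ), Real.exp (-a * x) = 1 / a := by
  have h := MeasureTheory.integral_comp_mul_left_Ioi (fun x => Real.exp (-x)) 0 ha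
  simp only [mul_zero, integral_exp_neg_Ioi, neg_zero, Real.exp_zero, smul_eq_mul, mul_one] at h
  simp_rw [neg_mul]
  rw [h, one_div]

/-- Mean residual life of the transformed exponential distribution:
`m(t) = ∫₀^∞ e^{−θx}(1 + β(e^{−θx} − 1)) dx` with
`β = λe^{−θt}/(1 + λ(e^{−θt} − 1))` equals
`(1 + λ(e^{−θt}/2 − 1))/(θ(1 + λ(e^{−θt} − 1)))`, and `m(t) → 1/θ` as `t → ∞`. -/
theorem transformed_exponential_mrl (θ lam : ℝ) (hθ : 0 < θ)
    (hlam : lam ∈ Set.Ioo (-1 : ℝ) 1) :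
    (∀ t : ℝ, 0 ≤ t →
      ∫ x in Set.Ioi (0 : ℝ),
          Real.exp (-θ * x) *
            (1 + (lam * Real.exp (-θ * t) / (1 + lam * (Real.exp (-θ * t) - 1))) *
              (Real.exp (-θ * x) - 1))
        = (1 + lam * (Real.exp (-θ * t) / 2 - 1)) /
            (θ * (1 + lam * (Real.exp (-θ * t) - 1)))) ∧
    Tendsto (fun t : ℝ => (1 + lam * (Real.exp (-θ * t) / 2 - 1)) /
        (θ * (1 + lam * (Real.exp (-θ * t) - 1)))) atTop (𝓝 (1 / θ)) := by
  obtain ⟨hl1, hl2⟩ := hlam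
  constructor
  · intro t ht
    set E : ℝ := Real.exp (-θ * t) with hE
    have hEpos : 0 < E := Real.exp_pos _
    have hEle : E ≤ 1 := by
      rw [hE]
      apply Real.exp_le_one_iff.mpr
      nlinarith
    have hD : 0 < 1 + lam * (E - 1) := by
      nlinarith [mul_nonneg (by linarith : (0:ℝ) ≤ 1 + lam) (by linarith : (0:ℝ) ≤ 1 - E)]
    set β : ℝ := lam * E / (1 + lam * (E - 1)) with hβ
    have key : ∀ x : ℝ, Real.exp (-θ * x) * (1 + β * (Real.exp (-θ * x) - 1))
        = (1 - β) * Real.exp (-θ * x) + β * Real.exp (-(2 * θ) * x) := by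
      intro x
      rw [show -(2 * θ) * x = -θ * x + -θ * x by ring, Real.exp_add]
      ring
    simp_rw [key]
    rw [integral_add (((exp_neg_integrableOn_Ioi 0 hθ).const_mul _))
        ((exp_neg_integrableOn_Ioi 0 (by linarith : (0:ℝ) < 2 * θ)).const_mul _),
      MeasureTheory.integral_const_mul, MeasureTheory.integral_const_mul, aux_exp_integral hθ,
      aux_exp_integral (by linarith : (0:ℝ) < 2 * θ), hβ]
    field_simp
    ring
  · have hE0 : Tendsto (fun t : ℝ => Real.exp (-θ * t)) atTop (𝓝 0) := by
      simp_rw [neg_mul]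
      exact Real.tendsto_exp_atBot.comp
        (tendsto_neg_atBot_iff.mpr (tendsto_id.const_mul_atTop hθ))
    have hnum : Tendsto (fun t : ℝ => 1 + lam * (Real.exp (-θ * t) / 2 - 1)) atTop
        (𝓝 (1 + lam * ((0:ℝ) / 2 - 1))) :=
      Tendsto.const_add _ (Tendsto.const_mul _ ((hE0.div_const 2).sub_const 1))
    have hden : Tendsto (fun t : ℝ => θ * (1 + lam * (Real.exp (-θ * t) - 1))) atTop
        (𝓝 (θ * (1 + lam * ((0:ℝ) - 1)))) :=
      Tendsto.const_mul _ (Tendsto.const_add _ (Tendsto.const_mul _ (hE0.sub_const 1)))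
    have hne : θ * (1 + lam * ((0:ℝ) - 1)) ≠ 0 := by
      have : 0 < 1 - lam := by linarith
      have := mul_pos hθ this
      intro h; rw [show (1:ℝ) + lam * (0 - 1) = 1 - lam by ring] at h; nlinarith
    have := hnum.div hden hne
    convert this using 2
    · rfl
    rw [show (1:ℝ) + lam * (0/2 - 1) = 1 - lam by ring,
      show (1:ℝ) + lam * (0 - 1) = 1 - lam by ring]
    rw [div_eq_div_iff (by positivity) (by nlinarith [mul_pos hθ (by linarith : (0:ℝ) < 1 - lam)])]
    ring
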